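/- Let h > 0, μ > 0, φ ∈ ℝ and set ε = μh²/4. Let θ : ℤ → ℝ satisfy sin((θₙ₊₁ − 2θₙ + θₙ₋₁)/4) + ε sin((θₙ₊₁ + 2θₙ + θₙ₋₁)/4 − φ) = 0 for all n ∈ ℤ. Let Λ = cos((θₙ₊₁ − θₙ)/2) + ε cos((θₙ₊₁ + θₙ)/2 − φ) (independent of n), and assume Λ ≠ 0 and cos((θₙ₊₁ − θₙ₋₁)/4) ≠ 0 for all n. Set Θₙ = (θₙ₊₁ + θₙ)/2, κₙ = (2/h) tan((θₙ₊₁ − θₙ₋₁)/4), let γ : ℤ → ℝ² satisfy γₙ₊₁ = γₙ + h·(cos Θₙ, sin Θₙ), and define uₙ = ⟨(sin φ, −cos φ), γₙ⟩. Then for all n ∈ ℤ: (κₙ₊₁ − κₙ)/h = −(μ/Λ) sin(Θₙ − φ) and (uₙ₊₁ − uₙ)/h = −sin(Θₙ − φ); in particular κₙ₊₁ − κₙ = (μ/Λ)(uₙ₊₁ − uₙ). -/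

import Mathlib

/-- Difference identities for a general discrete elastica segment:
`(κₙ₊₁ − κₙ)/h = −(μ/Λ) sin(Θₙ − φ)` and `(uₙ₊₁ − uₙ)/h = −sin(Θₙ − φ)`. -/
theorem discrete_elastica_difference_identities (h μ φ : ℝ) (hh : 0 < h) (hμ : 0 < μ)
    (ε : ℝ) (hε : ε = μ * h ^ 2 / 4)
    (θ : ℤ → ℝ)
    (hpend : ∀ n : ℤ,
      Real.sin ((θ (n + 1) - 2 * θ n + θ (n - 1)) / 4)
        + ε * Real.sin ((θ (n + 1) + 2 * θ n + θ (n - 1)) / 4 - φ) = 0)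
    (Λ : ℝ)
    (hΛ : ∀ n : ℤ,
      Real.cos ((θ (n + 1) - θ n) / 2)
        + ε * Real.cos ((θ (n + 1) + θ n) / 2 - φ) = Λ)
    (hΛ0 : Λ ≠ 0)
    (hcos : ∀ n : ℤ, Real.cos ((θ (n + 1) - θ (n - 1)) / 4) ≠ 0)
    (Θ : ℤ → ℝ) (hΘ : ∀ n : ℤ, Θ n = (θ (n + 1) + θ n) / 2)
    (κ : ℤ → ℝ) (hκ : ∀ n : ℤ, κ n = 2 / h * Real.tan ((θ (n + 1) - θ (n - 1)) / 4))
    (γ : ℤ → ℝ × ℝ)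
    (hγ : ∀ n : ℤ, γ (n + 1) = γ n + h • ((Real.cos (Θ n), Real.sin (Θ n)) : ℝ × ℝ))
    (u : ℤ → ℝ) (hu : ∀ n : ℤ, u n = Real.sin φ * (γ n).1 - Real.cos φ * (γ n).2) :
    ∀ n : ℤ,
      (κ (n + 1) - κ n) / h = -(μ / Λ) * Real.sin (Θ n - φ) ∧
      (u (n + 1) - u n) / h = -Real.sin (Θ n - φ) ∧
      κ (n + 1) - κ n = μ / Λ * (u (n + 1) - u n) := by
  intro n
  have hne : h ≠ 0 := ne_of_gt hh
  have e1 : (n : ℤ) + 1 + 1 = n + 2 := by ring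
  -- abbreviations
  have hp1 := hpend (n + 1)
  have hp0 := hpend n
  have hΛn := hΛ n
  have hcy := hcos n
  have hcx := hcos (n + 1)
  simp only [add_sub_cancel_right, e1] at hp1 hcx
  set a := θ (n + 2) with ha
  set b := θ (n + 1) with hb
  set c := θ n with hc
  set d := θ (n - 1) with hd
  set x := (a - c) / 4 with hx
  set y := (b - d) / 4 with hy
  set s := (b - c) / 2 with hs
  set T := (b + c) / 2 - φ with hT
  have hTΘ : Θ n - φ = T := by rw [hΘ]
  -- rewrite arguments of the pendulum / Λ equations
  have a1 : (a - 2 * b + c) / 4 = x - s := by rw [hx, hs]; ring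
  have a2 : (a + 2 * b + c) / 4 - φ = x + T := by rw [hx, hT]; ring
  have a3 : (b - 2 * c + d) / 4 = s - y := by rw [hy, hs]; ring
  have a4 : (b + 2 * c + d) / 4 - φ = T - y := by rw [hy, hT]; ring
  rw [a1, a2, Real.sin_sub, Real.sin_add] at hp1
  rw [a3, a4, Real.sin_sub, Real.sin_sub] at hp0
  -- key linear relations
  have E1 : Λ * Real.sin x = Real.cos x * (Real.sin s - ε * Real.sin T) := by
    linear_combination hp1 - Real.sin x * hΛn
  have E2 : Λ * Real.sin y = Real.cos y * (Real.sin s + ε * Real.sin T) := by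
    linear_combination -(Real.sin y * hΛn) - hp0
  have key : Λ * (Real.sin x * Real.cos y - Real.cos x * Real.sin y)
      = -(2 * ε) * Real.sin T * (Real.cos x * Real.cos y) := by
    linear_combination Real.cos y * E1 - Real.cos x * E2
  -- curvature values
  have hk1 : κ (n + 1) = 2 / h * (Real.sin x / Real.cos x) := by
    rw [hκ (n + 1)]
    simp only [add_sub_cancel_right, e1]
    rw [Real.tan_eq_sin_div_cos]
  have hk0 : κ n = 2 / h * (Real.sin y / Real.cos y) := by
    rw [hκ n, Real.tan_eq_sin_div_cos]
  -- first identity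
  have K : (κ (n + 1) - κ n) / h = -(μ / Λ) * Real.sin (Θ n - φ) := by
    rw [hTΘ, hk1, hk0]
    field_simp
    linear_combination 2 * key
      - 4 * Real.sin T * Real.cos x * Real.cos y * hε
  -- second identity
  have hg := hγ n
  have hg1 : (γ (n + 1)).1 = (γ n).1 + h * Real.cos (Θ n) := by rw [hg]; simp
  have hg2 : (γ (n + 1)).2 = (γ n).2 + h * Real.sin (Θ n) := by rw [hg]; simp
  have U : (u (n + 1) - u n) / h = -Real.sin (Θ n - φ) := by
    rw [hu (n + 1), hu n, hg1, hg2, Real.sin_sub]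
    field_simp
    ring
  refine ⟨K, U, ?_⟩
  have hK' : κ (n + 1) - κ n = h * (-(μ / Λ) * Real.sin (Θ n - φ)) := by
    rw [← K]; field_simp
  have hU' : u (n + 1) - u n = h * (-Real.sin (Θ n - φ)) := by
    rw [← U]; field_simp
  rw [hK', hU']; ring
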